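/- Let f : Ω → ℂᴺ be holomorphic on a ball Ω about 0 in ℂⁿ, with Taylor expansion f(z) = Σ_α c_α z^α. Let m = (m₁,...,mₙ) be real numbers, all positive, and suppose ⟨c_α, c_β⟩ · (m·(α − β)) = 0 for all multi-indices α, β. Then all but finitely many coefficient vectors c_α vanish; i.e., f is a polynomial map. -/

import Mathlib

noncomputable section
open Metric Set

/-- An automorphism of the unit ball of `EuclideanSpace ℂ ι`: a holomorphic self-map of the
ball with a holomorphic inverse. -/
def IsBallAut {ι : Type} [Fintype ι] (ψ : EuclideanSpace ℂ ι → EuclideanSpace ℂ ι) : Prop :=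
  DifferentiableOn ℂ ψ (ball (0 : EuclideanSpace ℂ ι) 1) ∧
    MapsTo ψ (ball (0 : EuclideanSpace ℂ ι) 1) (ball (0 : EuclideanSpace ℂ ι) 1) ∧
    ∃ φ : EuclideanSpace ℂ ι → EuclideanSpace ℂ ι,
      DifferentiableOn ℂ φ (ball (0 : EuclideanSpace ℂ ι) 1) ∧
      MapsTo φ (ball (0 : EuclideanSpace ℂ ι) 1) (ball (0 : EuclideanSpace ℂ ι) 1) ∧
      (∀ z ∈ ball (0 : EuclideanSpace ℂ ι) 1, φ (ψ z) = z) ∧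
      (∀ z ∈ ball (0 : EuclideanSpace ℂ ι) 1, ψ (φ z) = z)

/-- if `f(z) = Σ_α c_α z^α` on a ball about `0`, `m` has all-positive entries,
and `⟨c_α, c_β⟩ · (m·(α−β)) = 0` for all `α, β`, then only finitely many `c_α` are nonzero
and `f` is a polynomial map. -/
theorem stmt16 {n N : ℕ} (r : ℝ) (hr : 0 < r)
    (f : EuclideanSpace ℂ (Fin n) → EuclideanSpace ℂ (Fin N))
    (c : (Fin n → ℕ) → EuclideanSpace ℂ (Fin N))
    (habs : ∀ z ∈ ball (0 : EuclideanSpace ℂ (Fin n)) r,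
      Summable (fun α : Fin n → ℕ => ‖c α‖ * ∏ j, ‖z j‖ ^ α j))
    (hser : ∀ z ∈ ball (0 : EuclideanSpace ℂ (Fin n)) r,
      HasSum (fun α : Fin n → ℕ => (∏ j, z j ^ α j) • c α) (f z))
    (m : Fin n → ℝ) (hm : ∀ j, 0 < m j)
    (horth : ∀ α β : Fin n → ℕ,
      (inner ℂ (c α) (c β) : ℂ) * ((∑ j, m j * ((α j : ℝ) - (β j : ℝ)) : ℝ) : ℂ) = 0) :
    {α : Fin n → ℕ | c α ≠ 0}.Finite ∧
    ∃ S : Finset (Fin n → ℕ), ∀ z ∈ ball (0 : EuclideanSpace ℂ (Fin n)) r,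
      f z = ∑ α ∈ S, (∏ j, z j ^ α j) • c α := by
  classical
  set S : Set (Fin n → ℕ) := {α : Fin n → ℕ | c α ≠ 0} with hS
  -- the weight of a multi-index
  set v : (Fin n → ℕ) → ℝ := fun α => ∑ j, m j * (α j : ℝ) with hv
  -- coefficients with different weights are orthogonal
  have key : ∀ α β : Fin n → ℕ, v α ≠ v β → (inner ℂ (c α) (c β) : ℂ) = 0 := by
    intro α β hne
    have h := horth α β
    have hd : (∑ j, m j * ((α j : ℝ) - (β j : ℝ))) = v α - v β := by
      simp [hv, mul_sub, Finset.sum_sub_distrib]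
    rw [hd] at h
    have : ((v α - v β : ℝ) : ℂ) ≠ 0 := by
      rw [Complex.ofReal_ne_zero]
      exact sub_ne_zero.mpr hne
    exact (mul_eq_zero.mp h).resolve_right this
  -- each fiber of v is finite
  have hfib : ∀ t : ℝ, {α : Fin n → ℕ | v α = t}.Finite := by
    intro t
    have hsub : {α : Fin n → ℕ | v α = t} ⊆
        Set.pi Set.univ (fun j => Set.Iic (⌊t / m j⌋₊)) := by
      intro α hα j _
      have hle : m j * (α j : ℝ) ≤ t := by
        rw [← hα]
        exact Finset.single_le_sum (f := fun j => m j * (α j : ℝ))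
          (fun i _ => mul_nonneg (hm i).le (Nat.cast_nonneg _)) (Finset.mem_univ j)
      have : (α j : ℝ) ≤ t / m j := (le_div_iff₀' (hm j)).mpr hle
      exact Nat.le_floor this
    exact (Set.Finite.pi (fun j => Set.finite_Iic _)).subset hsub
  -- the set of weights of nonzero coefficients is finite
  have hT : (v '' S).Finite := by
    have hz : ∀ t : v '' S, c t.2.choose ≠ 0 := fun t => t.2.choose_spec.1
    have hli : LinearIndependent ℂ (fun t : v '' S => c t.2.choose) := by
      apply linearIndependent_of_ne_zero_of_inner_eq_zero hz
      intro s t hst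
      apply key
      rw [s.2.choose_spec.2, t.2.choose_spec.2]
      exact fun h => hst (Subtype.ext h)
    have : Finite (v '' S) := hli.finite
    exact (v '' S).toFinite
  -- hence S is finite
  have hSfin : S.Finite := by
    have : S ⊆ ⋃ t ∈ v '' S, {α : Fin n → ℕ | v α = t} := by
      intro α hα
      exact Set.mem_biUnion (Set.mem_image_of_mem v hα) rfl
    exact (Set.Finite.biUnion hT (fun t _ => hfib t)).subset this
  refine ⟨hSfin, hSfin.toFinset, fun z hz => ?_⟩
  have h1 := hser z hz
  have h2 : HasSum (fun α : Fin n → ℕ => (∏ j, z j ^ α j) • c α)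
      (∑ α ∈ hSfin.toFinset, (∏ j, z j ^ α j) • c α) := by
    apply hasSum_sum_of_ne_finset_zero
    intro α hα
    have : c α = 0 := by
      by_contra h
      exact hα (hSfin.mem_toFinset.mpr h)
    simp [this]
  exact h1.unique h2
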